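/- The subgroup Γ₁(4) ∩ Γ(2) of SL(2, ℤ) is generated by the three matrices g₁ = [[1, 2], [0, 1]], g₂ = [[1, 0], [4, 1]], and g₃ = [[−3, 2], [4, −3]]. -/

import Mathlib

open Matrix CongruenceSubgroup

/-- `g₁ = [[1, 2], [0, 1]]` as an element of `SL(2, ℤ)`. -/
def g1 : Matrix.SpecialLinearGroup (Fin 2) ℤ :=
  ⟨!![1, 2; 0, 1], by norm_num [Matrix.det_fin_two_of]⟩

/-- `g₂ = [[1, 0], [4, 1]]` as an element of `SL(2, ℤ)`. -/
def g2 : Matrix.SpecialLinearGroup (Fin 2) ℤ :=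
  ⟨!![1, 0; 4, 1], by norm_num [Matrix.det_fin_two_of]⟩

/-- `g₃ = [[−3, 2], [4, −3]]` as an element of `SL(2, ℤ)`. -/
def g3 : Matrix.SpecialLinearGroup (Fin 2) ℤ :=
  ⟨!![-3, 2; 4, -3], by norm_num [Matrix.det_fin_two_of]⟩

def g1i : Matrix.SpecialLinearGroup (Fin 2) ℤ :=
  ⟨!![1, -2; 0, 1], by norm_num [Matrix.det_fin_two_of]⟩
def g2i : Matrix.SpecialLinearGroup (Fin 2) ℤ :=
  ⟨!![1, 0; -4, 1], by norm_num [Matrix.det_fin_two_of]⟩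
def g3i : Matrix.SpecialLinearGroup (Fin 2) ℤ :=
  ⟨!![-3, -2; -4, -3], by norm_num [Matrix.det_fin_two_of]⟩

lemma g1_mul_g1i : g1 * g1i = 1 := by
  apply Subtype.ext
  change (g1 : Matrix (Fin 2) (Fin 2) ℤ) * (g1i : Matrix (Fin 2) (Fin 2) ℤ) = 1
  simp [g1, g1i, Matrix.mul_fin_two, Matrix.one_fin_two]

lemma g2_mul_g2i : g2 * g2i = 1 := by
  apply Subtype.ext
  change (g2 : Matrix (Fin 2) (Fin 2) ℤ) * (g2i : Matrix (Fin 2) (Fin 2) ℤ) = 1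
  simp [g2, g2i, Matrix.mul_fin_two, Matrix.one_fin_two]

lemma g3_mul_g3i : g3 * g3i = 1 := by
  apply Subtype.ext
  change (g3 : Matrix (Fin 2) (Fin 2) ℤ) * (g3i : Matrix (Fin 2) (Fin 2) ℤ) = 1
  norm_num [g3, g3i, Matrix.mul_fin_two, Matrix.one_fin_two]
  exact Matrix.one_fin_two.symm

lemma mul_entry (X M : Matrix.SpecialLinearGroup (Fin 2) ℤ) (i j : Fin 2) :
    ((X * M : Matrix.SpecialLinearGroup (Fin 2) ℤ) : Matrix (Fin 2) (Fin 2) ℤ) i j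
      = X i 0 * M 0 j + X i 1 * M 1 j := by
  simp [Matrix.mul_apply, Fin.sum_univ_two]

lemma mem_G_conds (M : Matrix.SpecialLinearGroup (Fin 2) ℤ) (h : M ∈ Gamma1 4 ⊓ Gamma 2) :
    (M 0 0) % 4 = 1 ∧ (M 1 1) % 4 = 1 ∧ (M 1 0) % 4 = 0 ∧ (M 0 1) % 2 = 0 := by
  rw [Subgroup.mem_inf, Gamma1_mem, Gamma_mem] at h
  obtain ⟨⟨ha, hd, hc⟩, ⟨_, hb, _, _⟩⟩ := h
  rw [show (1 : ZMod 4) = ((1 : ℤ) : ZMod 4) by norm_num, ZMod.intCast_eq_intCast_iff] at ha hd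
  rw [show (0 : ZMod 4) = ((0 : ℤ) : ZMod 4) by norm_num, ZMod.intCast_eq_intCast_iff] at hc
  rw [show (0 : ZMod 2) = ((0 : ℤ) : ZMod 2) by norm_num, ZMod.intCast_eq_intCast_iff] at hb
  simp [Int.ModEq] at ha hd hc hb
  omega

lemma g1_mem_G : g1 ∈ Gamma1 4 ⊓ Gamma 2 := by
  rw [Subgroup.mem_inf, Gamma1_mem, Gamma_mem]
  norm_num [g1]
  decide
lemma g2_mem_G : g2 ∈ Gamma1 4 ⊓ Gamma 2 := by
  rw [Subgroup.mem_inf, Gamma1_mem, Gamma_mem]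
  norm_num [g2]
  decide
lemma g3_mem_G : g3 ∈ Gamma1 4 ⊓ Gamma 2 := by
  rw [Subgroup.mem_inf, Gamma1_mem, Gamma_mem]
  norm_num [g3]
  decide

lemma closure_le_G : Subgroup.closure {g1, g2, g3} ≤ Gamma1 4 ⊓ Gamma 2 := by
  rw [Subgroup.closure_le]
  rintro x (rfl | rfl | rfl)
  · exact g1_mem_G
  · exact g2_mem_G
  · exact g3_mem_G
lemma mul_entry' (X M : Matrix.SpecialLinearGroup (Fin 2) ℤ) (i j : Fin 2) :
    (X * M : Matrix.SpecialLinearGroup (Fin 2) ℤ) i j = X i 0 * M 0 j + X i 1 * M 1 j := by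
  simp [Matrix.mul_apply, Fin.sum_univ_two]
lemma main_induction : ∀ (n m k : ℕ) (M : Matrix.SpecialLinearGroup (Fin 2) ℤ),
    M ∈ Gamma1 4 ⊓ Gamma 2 →
    (M 1 0).natAbs = n → (M 0 0).natAbs = m → (M 0 1).natAbs = k →
    M ∈ Subgroup.closure {g1, g2, g3} := by
  intro n
  induction n using Nat.strong_induction_on with
  | _ n ihn =>
  intro m
  induction m using Nat.strong_induction_on with
  | _ m ihm =>
  intro k
  induction k using Nat.strong_induction_on with
  | _ k ihk =>
  intro M hM hc ha hb
  obtain ⟨ha4, hd4, hc4, hb2⟩ := mem_G_conds M hM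
  have hdet : M 0 0 * M 1 1 - M 0 1 * M 1 0 = 1 := by
    have h2 := M.2; rwa [Matrix.det_fin_two] at h2
  have m1 : g1 ∈ Subgroup.closure ({g1, g2, g3} : Set (Matrix.SpecialLinearGroup (Fin 2) ℤ)) :=
    Subgroup.subset_closure (by simp)
  have m2 : g2 ∈ Subgroup.closure ({g1, g2, g3} : Set (Matrix.SpecialLinearGroup (Fin 2) ℤ)) :=
    Subgroup.subset_closure (by simp)
  have m3 : g3 ∈ Subgroup.closure ({g1, g2, g3} : Set (Matrix.SpecialLinearGroup (Fin 2) ℤ)) :=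
    Subgroup.subset_closure (by simp)
  have m1i : g1i ∈ Subgroup.closure ({g1, g2, g3} : Set (Matrix.SpecialLinearGroup (Fin 2) ℤ)) := by
    rw [← inv_eq_of_mul_eq_one_right g1_mul_g1i]; exact inv_mem m1
  have m2i : g2i ∈ Subgroup.closure ({g1, g2, g3} : Set (Matrix.SpecialLinearGroup (Fin 2) ℤ)) := by
    rw [← inv_eq_of_mul_eq_one_right g2_mul_g2i]; exact inv_mem m2
  have m3i : g3i ∈ Subgroup.closure ({g1, g2, g3} : Set (Matrix.SpecialLinearGroup (Fin 2) ℤ)) := by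
    rw [← inv_eq_of_mul_eq_one_right g3_mul_g3i]; exact inv_mem m3
  by_cases hc0 : M 1 0 = 0
  · -- c = 0 : then a = d = 1, reduce |b|
    have had : M 0 0 * M 1 1 = 1 := by rw [hc0] at hdet; linarith
    have ha1 : M 0 0 = 1 := by
      rcases Int.eq_one_or_neg_one_of_mul_eq_one had with h | h <;> omega
    have hd1 : M 1 1 = 1 := by rw [ha1] at had; linarith
    by_cases hb0 : M 0 1 = 0
    · have hM1 : M = 1 := by
        apply Subtype.ext
        rw [Matrix.eta_fin_two (M : Matrix (Fin 2) (Fin 2) ℤ)]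
        rw [show (M : Matrix (Fin 2) (Fin 2) ℤ) 0 0 = M 0 0 from rfl,
            show (M : Matrix (Fin 2) (Fin 2) ℤ) 0 1 = M 0 1 from rfl,
            show (M : Matrix (Fin 2) (Fin 2) ℤ) 1 0 = M 1 0 from rfl,
            show (M : Matrix (Fin 2) (Fin 2) ℤ) 1 1 = M 1 1 from rfl,
            ha1, hd1, hb0, hc0]
        exact Matrix.one_fin_two.symm
      rw [hM1]; exact one_mem _
    · by_cases hbp : 0 < M 0 1
      · refine (Subgroup.mul_mem_cancel_left _ m1i).mp ?_
        have ec : (g1i * M : Matrix.SpecialLinearGroup (Fin 2) ℤ) 1 0 = M 1 0 := by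
          rw [mul_entry']; simp [g1i]
        have ea : (g1i * M : Matrix.SpecialLinearGroup (Fin 2) ℤ) 0 0 = M 0 0 := by
          rw [mul_entry']; simp [g1i] <;> omega
        have eb : (g1i * M : Matrix.SpecialLinearGroup (Fin 2) ℤ) 0 1
            = M 0 1 - 2 * M 1 1 := by
          rw [mul_entry']; simp [g1i] <;> omega
        refine ihk ((g1i * M : Matrix.SpecialLinearGroup (Fin 2) ℤ) 0 1).natAbs ?_ _
          (mul_mem (closure_le_G m1i) hM) ?_ ?_ rfl
        · rw [eb, hd1]; omega
        · rw [ec]; exact hc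
        · rw [ea]; exact ha
      · refine (Subgroup.mul_mem_cancel_left _ m1).mp ?_
        have ec : (g1 * M : Matrix.SpecialLinearGroup (Fin 2) ℤ) 1 0 = M 1 0 := by
          rw [mul_entry']; simp [g1]
        have ea : (g1 * M : Matrix.SpecialLinearGroup (Fin 2) ℤ) 0 0 = M 0 0 := by
          rw [mul_entry']; simp [g1] <;> omega
        have eb : (g1 * M : Matrix.SpecialLinearGroup (Fin 2) ℤ) 0 1
            = M 0 1 + 2 * M 1 1 := by
          rw [mul_entry']; simp [g1] <;> omega
        refine ihk ((g1 * M : Matrix.SpecialLinearGroup (Fin 2) ℤ) 0 1).natAbs ?_ _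
          (mul_mem (closure_le_G m1) hM) ?_ ?_ rfl
        · rw [eb, hd1]; omega
        · rw [ec]; exact hc
        · rw [ea]; exact ha
  · -- c ≠ 0
    by_cases hlt : (M 1 0).natAbs < (M 0 0).natAbs
    · -- reduce |a| using g1^{±1}
      by_cases hap : 0 < M 0 0 <;> by_cases hcp : 0 < M 1 0
      · -- a > 0, c > 0 : use g1i, a' = a - 2c
        refine (Subgroup.mul_mem_cancel_left _ m1i).mp ?_
        have ec : (g1i * M : Matrix.SpecialLinearGroup (Fin 2) ℤ) 1 0 = M 1 0 := by
          rw [mul_entry']; simp [g1i]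
        have ea : (g1i * M : Matrix.SpecialLinearGroup (Fin 2) ℤ) 0 0
            = M 0 0 - 2 * M 1 0 := by
          rw [mul_entry']; simp [g1i] <;> omega
        refine ihm ((g1i * M : Matrix.SpecialLinearGroup (Fin 2) ℤ) 0 0).natAbs ?_ _ _
          (mul_mem (closure_le_G m1i) hM) ?_ rfl rfl
        · rw [ea]; omega
        · rw [ec]; exact hc
      · -- a > 0, c < 0 : use g1, a' = a + 2c
        refine (Subgroup.mul_mem_cancel_left _ m1).mp ?_
        have ec : (g1 * M : Matrix.SpecialLinearGroup (Fin 2) ℤ) 1 0 = M 1 0 := by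
          rw [mul_entry']; simp [g1]
        have ea : (g1 * M : Matrix.SpecialLinearGroup (Fin 2) ℤ) 0 0
            = M 0 0 + 2 * M 1 0 := by
          rw [mul_entry']; simp [g1] <;> omega
        refine ihm ((g1 * M : Matrix.SpecialLinearGroup (Fin 2) ℤ) 0 0).natAbs ?_ _ _
          (mul_mem (closure_le_G m1) hM) ?_ rfl rfl
        · rw [ea]; omega
        · rw [ec]; exact hc
      · -- a < 0, c > 0 : use g1, a' = a + 2c
        refine (Subgroup.mul_mem_cancel_left _ m1).mp ?_
        have ec : (g1 * M : Matrix.SpecialLinearGroup (Fin 2) ℤ) 1 0 = M 1 0 := by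
          rw [mul_entry']; simp [g1]
        have ea : (g1 * M : Matrix.SpecialLinearGroup (Fin 2) ℤ) 0 0
            = M 0 0 + 2 * M 1 0 := by
          rw [mul_entry']; simp [g1] <;> omega
        refine ihm ((g1 * M : Matrix.SpecialLinearGroup (Fin 2) ℤ) 0 0).natAbs ?_ _ _
          (mul_mem (closure_le_G m1) hM) ?_ rfl rfl
        · rw [ea]; omega
        · rw [ec]; exact hc
      · -- a < 0, c < 0 : use g1i, a' = a - 2c
        refine (Subgroup.mul_mem_cancel_left _ m1i).mp ?_
        have ec : (g1i * M : Matrix.SpecialLinearGroup (Fin 2) ℤ) 1 0 = M 1 0 := by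
          rw [mul_entry']; simp [g1i]
        have ea : (g1i * M : Matrix.SpecialLinearGroup (Fin 2) ℤ) 0 0
            = M 0 0 - 2 * M 1 0 := by
          rw [mul_entry']; simp [g1i] <;> omega
        refine ihm ((g1i * M : Matrix.SpecialLinearGroup (Fin 2) ℤ) 0 0).natAbs ?_ _ _
          (mul_mem (closure_le_G m1i) hM) ?_ rfl rfl
        · rw [ea]; omega
        · rw [ec]; exact hc
    · by_cases hlt2 : 2 * (M 0 0).natAbs < (M 1 0).natAbs
      · -- reduce |c| using g2^{±1}
        by_cases hap : 0 < M 0 0 <;> by_cases hcp : 0 < M 1 0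
        · refine (Subgroup.mul_mem_cancel_left _ m2i).mp ?_
          have ec : (g2i * M : Matrix.SpecialLinearGroup (Fin 2) ℤ) 1 0
              = M 1 0 - 4 * M 0 0 := by
            rw [mul_entry']; simp [g2i] <;> omega
          refine ihn ((g2i * M : Matrix.SpecialLinearGroup (Fin 2) ℤ) 1 0).natAbs ?_ _ _ _
            (mul_mem (closure_le_G m2i) hM) rfl rfl rfl
          rw [ec]; omega
        · refine (Subgroup.mul_mem_cancel_left _ m2).mp ?_
          have ec : (g2 * M : Matrix.SpecialLinearGroup (Fin 2) ℤ) 1 0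
              = M 1 0 + 4 * M 0 0 := by
            rw [mul_entry']; simp [g2] <;> omega
          refine ihn ((g2 * M : Matrix.SpecialLinearGroup (Fin 2) ℤ) 1 0).natAbs ?_ _ _ _
            (mul_mem (closure_le_G m2) hM) rfl rfl rfl
          rw [ec]; omega
        · refine (Subgroup.mul_mem_cancel_left _ m2).mp ?_
          have ec : (g2 * M : Matrix.SpecialLinearGroup (Fin 2) ℤ) 1 0
              = M 1 0 + 4 * M 0 0 := by
            rw [mul_entry']; simp [g2] <;> omega
          refine ihn ((g2 * M : Matrix.SpecialLinearGroup (Fin 2) ℤ) 1 0).natAbs ?_ _ _ _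
            (mul_mem (closure_le_G m2) hM) rfl rfl rfl
          rw [ec]; omega
        · refine (Subgroup.mul_mem_cancel_left _ m2i).mp ?_
          have ec : (g2i * M : Matrix.SpecialLinearGroup (Fin 2) ℤ) 1 0
              = M 1 0 - 4 * M 0 0 := by
            rw [mul_entry']; simp [g2i] <;> omega
          refine ihn ((g2i * M : Matrix.SpecialLinearGroup (Fin 2) ℤ) 1 0).natAbs ?_ _ _ _
            (mul_mem (closure_le_G m2i) hM) rfl rfl rfl
          rw [ec]; omega
      · -- |a| < |c| < 2|a| : use g3^{±1}
        by_cases hap : 0 < M 0 0 <;> by_cases hcp : 0 < M 1 0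
        · -- same signs : g3, c' = 4a - 3c
          refine (Subgroup.mul_mem_cancel_left _ m3).mp ?_
          have ec : (g3 * M : Matrix.SpecialLinearGroup (Fin 2) ℤ) 1 0
              = 4 * M 0 0 - 3 * M 1 0 := by
            rw [mul_entry']; simp [g3] <;> omega
          refine ihn ((g3 * M : Matrix.SpecialLinearGroup (Fin 2) ℤ) 1 0).natAbs ?_ _ _ _
            (mul_mem (closure_le_G m3) hM) rfl rfl rfl
          rw [ec]; omega
        · -- opposite signs : g3i, c' = -4a - 3c
          refine (Subgroup.mul_mem_cancel_left _ m3i).mp ?_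
          have ec : (g3i * M : Matrix.SpecialLinearGroup (Fin 2) ℤ) 1 0
              = -4 * M 0 0 - 3 * M 1 0 := by
            rw [mul_entry']; simp [g3i] <;> omega
          refine ihn ((g3i * M : Matrix.SpecialLinearGroup (Fin 2) ℤ) 1 0).natAbs ?_ _ _ _
            (mul_mem (closure_le_G m3i) hM) rfl rfl rfl
          rw [ec]; omega
        · refine (Subgroup.mul_mem_cancel_left _ m3i).mp ?_
          have ec : (g3i * M : Matrix.SpecialLinearGroup (Fin 2) ℤ) 1 0
              = -4 * M 0 0 - 3 * M 1 0 := by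
            rw [mul_entry']; simp [g3i] <;> omega
          refine ihn ((g3i * M : Matrix.SpecialLinearGroup (Fin 2) ℤ) 1 0).natAbs ?_ _ _ _
            (mul_mem (closure_le_G m3i) hM) rfl rfl rfl
          rw [ec]; omega
        · refine (Subgroup.mul_mem_cancel_left _ m3).mp ?_
          have ec : (g3 * M : Matrix.SpecialLinearGroup (Fin 2) ℤ) 1 0
              = 4 * M 0 0 - 3 * M 1 0 := by
            rw [mul_entry']; simp [g3] <;> omega
          refine ihn ((g3 * M : Matrix.SpecialLinearGroup (Fin 2) ℤ) 1 0).natAbs ?_ _ _ _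
            (mul_mem (closure_le_G m3) hM) rfl rfl rfl
          rw [ec]; omega

/-- The subgroup `Γ₁(4) ∩ Γ(2)` of `SL(2, ℤ)` is generated by `g₁`, `g₂` and `g₃`. -/
theorem gamma1_four_inter_gamma_two_generators :
    Subgroup.closure {g1, g2, g3} = Gamma1 4 ⊓ Gamma 2 := by
  refine le_antisymm closure_le_G fun M hM => ?_
  exact main_induction _ _ _ M hM rfl rfl rfl
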